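/- Let λ be a Borel measure on ℝ^{n+2} such that the pushforward of λ under g_t equals λ for every t ∈ ℝ. Then for every c > 0, all T, r > 0, and every Borel set A ⊆ S^{n−1}, one has r·λ(F_{T,c,A}) = T·λ(F_{r,c,A}) (as an equality of extended nonnegative reals). -/

import Mathlib

noncomputable section

open MeasureTheory Metric Filter Topology
open scoped ENNReal

/-- The index of the coordinate `x_{n+2}` (0-indexed: `n+1`). -/
def lastC (n : ℕ) : Fin (n + 2) := Fin.last (n + 1)

/-- The index of the coordinate `x_{n+1}` (0-indexed: `n`). -/
def sndC (n : ℕ) : Fin (n + 2) := ⟨n, by omega⟩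

/-- The quadratic form `Q(x) = x_1² + ⋯ + x_{n+1}² − x_{n+2}²`. -/
def Qf (n : ℕ) (x : EuclideanSpace ℝ (Fin (n + 2))) : ℝ :=
  (∑ i : Fin (n + 1), x (Fin.castSucc i) ^ 2) - x (lastC n) ^ 2

/-- The positive light cone. -/
def lightCone (n : ℕ) : Set (EuclideanSpace ℝ (Fin (n + 2))) :=
  {x | Qf n x = 0 ∧ 0 ≤ x (lastC n)}

/-- `Λ₀`: the intersection of the light cone with `ℤ^{n+1} × ℤ_{>0}`. -/
def Lat0 (n : ℕ) : Set (EuclideanSpace ℝ (Fin (n + 2))) :=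
  {x | x ∈ lightCone n ∧ (∀ i, ∃ m : ℤ, x i = (m : ℝ)) ∧ 0 < x (lastC n)}

/-- The set `F_{T,c}`. -/
def Fset (n : ℕ) (T c : ℝ) : Set (EuclideanSpace ℝ (Fin (n + 2))) :=
  {x | x ∈ lightCone n ∧ x (lastC n) ^ 2 - x (sndC n) ^ 2 < c ^ 2 ∧
    1 ≤ x (sndC n) + x (lastC n) ∧ x (sndC n) + x (lastC n) < Real.exp T}

/-- The set `E_{T,c}`. -/
def Eset (n : ℕ) (T c : ℝ) : Set (EuclideanSpace ℝ (Fin (n + 2))) :=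
  {x | x ∈ lightCone n ∧ 2 * x (lastC n) * (x (lastC n) - x (sndC n)) < c ^ 2 ∧
    1 ≤ x (lastC n) ∧ x (lastC n) < Real.cosh T}

/-- The first `n+1` coordinates of a point of `ℝ^{n+2}`. -/
def firstPart (n : ℕ) (x : EuclideanSpace ℝ (Fin (n + 2))) : EuclideanSpace ℝ (Fin (n + 1)) :=
  WithLp.toLp 2 (fun i => x (Fin.castSucc i))

/-- The first `n` coordinates of a point of `ℝ^{n+2}`. -/
def headN (n : ℕ) (x : EuclideanSpace ℝ (Fin (n + 2))) : EuclideanSpace ℝ (Fin n) :=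
  WithLp.toLp 2 (fun i => x (Fin.castLE (by omega) i : Fin (n + 2)))

/-- The direction map `π(x) = (x_1,…,x_n)/‖(x_1,…,x_n)‖`. -/
def dir (n : ℕ) (x : EuclideanSpace ℝ (Fin (n + 2))) : EuclideanSpace ℝ (Fin n) :=
  ‖headN n x‖⁻¹ • headN n x

/-- The one-parameter diagonal flow `g_t`. -/
def gmap (n : ℕ) (t : ℝ) (x : EuclideanSpace ℝ (Fin (n + 2))) :
    EuclideanSpace ℝ (Fin (n + 2)) :=
  WithLp.toLp 2 fun i =>
    if i = sndC n then Real.cosh t * x (sndC n) - Real.sinh t * x (lastC n)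
    else if i = lastC n then - Real.sinh t * x (sndC n) + Real.cosh t * x (lastC n)
    else x i

/-- The set `F_{T,c,A}`. -/
def FsetA (n : ℕ) (T c : ℝ) (A : Set ↑(sphere (0 : EuclideanSpace ℝ (Fin n)) 1)) :
    Set (EuclideanSpace ℝ (Fin (n + 2))) :=
  {x | x ∈ Fset n T c ∧ headN n x ≠ 0 ∧ dir n x ∈ Subtype.val '' A}

/-- The set `E_{T,c,A}`. -/
def EsetA (n : ℕ) (T c : ℝ) (A : Set ↑(sphere (0 : EuclideanSpace ℝ (Fin n)) 1)) :
    Set (EuclideanSpace ℝ (Fin (n + 2))) :=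
  {x | x ∈ Eset n T c ∧ headN n x ≠ 0 ∧ dir n x ∈ Subtype.val '' A}


namespace FsetAux

variable {n : ℕ}

lemma sndC_val (n : ℕ) : (sndC n).val = n := rfl

lemma lastC_val (n : ℕ) : (lastC n).val = n + 1 := rfl

lemma lastC_ne_sndC (n : ℕ) : lastC n ≠ sndC n := by
  simp [Fin.ext_iff, sndC_val, lastC_val]

lemma gmap_sndC (t : ℝ) (x : EuclideanSpace ℝ (Fin (n + 2))) :
    gmap n t x (sndC n) = Real.cosh t * x (sndC n) - Real.sinh t * x (lastC n) := by
  simp [gmap]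

lemma gmap_lastC (t : ℝ) (x : EuclideanSpace ℝ (Fin (n + 2))) :
    gmap n t x (lastC n) = - Real.sinh t * x (sndC n) + Real.cosh t * x (lastC n) := by
  simp [gmap, lastC_ne_sndC]

lemma gmap_other (t : ℝ) (x : EuclideanSpace ℝ (Fin (n + 2))) (i : Fin (n + 2))
    (h1 : i ≠ sndC n) (h2 : i ≠ lastC n) : gmap n t x i = x i := by
  simp [gmap, h1, h2]

lemma headN_gmap (t : ℝ) (x : EuclideanSpace ℝ (Fin (n + 2))) :
    headN n (gmap n t x) = headN n x := by
  ext i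
  exact gmap_other t x _
    (by simp only [ne_eq, Fin.ext_iff, sndC_val, Fin.coe_castLE]; omega)
    (by simp only [ne_eq, Fin.ext_iff, lastC_val, Fin.coe_castLE]; omega)

lemma dir_gmap (t : ℝ) (x : EuclideanSpace ℝ (Fin (n + 2))) :
    dir n (gmap n t x) = dir n x := by
  unfold dir; rw [headN_gmap]

lemma castSucc_last_eq_sndC (n : ℕ) : Fin.castSucc (Fin.last n) = sndC n := by
  simp [sndC, Fin.ext_iff]

lemma Qf_gmap (t : ℝ) (x : EuclideanSpace ℝ (Fin (n + 2))) :
    Qf n (gmap n t x) = Qf n x := by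
  have hc : Real.cosh t ^ 2 - Real.sinh t ^ 2 = 1 := Real.cosh_sq_sub_sinh_sq t
  unfold Qf
  rw [Fin.sum_univ_castSucc (f := fun i : Fin (n+1) => gmap n t x (Fin.castSucc i) ^ 2),
    Fin.sum_univ_castSucc (f := fun i : Fin (n+1) => x (Fin.castSucc i) ^ 2)]
  have hs : ∀ i : Fin n,
      gmap n t x (Fin.castSucc (Fin.castSucc i)) = x (Fin.castSucc (Fin.castSucc i)) := fun i =>
    gmap_other t x _
      (by simp only [ne_eq, Fin.ext_iff, sndC_val, Fin.coe_castSucc]; omega)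
      (by simp only [ne_eq, Fin.ext_iff, lastC_val, Fin.coe_castSucc]; omega)
  rw [castSucc_last_eq_sndC]
  simp only [hs, gmap_sndC, gmap_lastC]
  linear_combination (x (sndC n) ^ 2 - x (lastC n) ^ 2) * hc

lemma gmap_sum (t : ℝ) (x : EuclideanSpace ℝ (Fin (n + 2))) :
    gmap n t x (sndC n) + gmap n t x (lastC n)
      = Real.exp (-t) * (x (sndC n) + x (lastC n)) := by
  rw [gmap_sndC, gmap_lastC, ← Real.cosh_sub_sinh]; ring

lemma gmap_diffsq (t : ℝ) (x : EuclideanSpace ℝ (Fin (n + 2))) :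
    gmap n t x (lastC n) ^ 2 - gmap n t x (sndC n) ^ 2
      = x (lastC n) ^ 2 - x (sndC n) ^ 2 := by
  rw [gmap_sndC, gmap_lastC]
  linear_combination (x (lastC n) ^ 2 - x (sndC n) ^ 2) * Real.cosh_sq_sub_sinh_sq t

lemma continuous_gmap (t : ℝ) : Continuous (gmap n t) := by
  unfold gmap
  apply (PiLp.continuous_toLp 2 _).comp
  apply continuous_pi
  intro i
  split_ifs
  · exact (continuous_const.mul (EuclideanSpace.proj (sndC n)).continuous).sub
      (continuous_const.mul (EuclideanSpace.proj (lastC n)).continuous)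
  · exact (continuous_const.mul (EuclideanSpace.proj (sndC n)).continuous).add
      (continuous_const.mul (EuclideanSpace.proj (lastC n)).continuous)
  · exact (EuclideanSpace.proj i).continuous

lemma continuous_headN : Continuous (headN (n := n)) := by
  apply (PiLp.continuous_toLp 2 _).comp
  apply continuous_pi
  intro i
  exact (EuclideanSpace.proj (Fin.castLE (by omega) i)).continuous

lemma measurable_dir : Measurable (dir (n := n)) := by
  exact (continuous_headN.norm.measurable.inv).smul continuous_headN.measurable

lemma continuous_Qf : Continuous (Qf n) := by
  unfold Qf
  exact (continuous_finset_sum _ fun i _ =>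
    (EuclideanSpace.proj (Fin.castSucc i)).continuous.pow 2).sub
    ((EuclideanSpace.proj (lastC n)).continuous.pow 2)

/-- The band sets. -/
def bandA (n : ℕ) (a b c : ℝ) (A : Set ↑(sphere (0 : EuclideanSpace ℝ (Fin n)) 1)) :
    Set (EuclideanSpace ℝ (Fin (n + 2))) :=
  {x | Qf n x = 0 ∧ x (lastC n) ^ 2 - x (sndC n) ^ 2 < c ^ 2 ∧
    Real.exp a ≤ x (sndC n) + x (lastC n) ∧ x (sndC n) + x (lastC n) < Real.exp b ∧
    headN n x ≠ 0 ∧ dir n x ∈ Subtype.val '' A}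

lemma sq_snd_le (x : EuclideanSpace ℝ (Fin (n + 2))) (hQ : Qf n x = 0) :
    x (sndC n) ^ 2 ≤ x (lastC n) ^ 2 := by
  have h := Finset.single_le_sum (f := fun i : Fin (n + 1) => x (Fin.castSucc i) ^ 2)
    (fun i _ => sq_nonneg _) (Finset.mem_univ (Fin.last n))
  beta_reduce at h
  rw [castSucc_last_eq_sndC (n := n)] at h
  have hsum : (∑ i : Fin (n + 1), x (Fin.castSucc i) ^ 2) = x (lastC n) ^ 2 := by
    have := hQ; unfold Qf at this; linarith
  linarith

lemma last_nonneg (x : EuclideanSpace ℝ (Fin (n + 2))) (hQ : Qf n x = 0)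
    (hpos : 0 < x (sndC n) + x (lastC n)) : 0 ≤ x (lastC n) := by
  have h := sq_snd_le x hQ
  nlinarith [h, hpos]

lemma FsetA_eq_bandA (T c : ℝ) (A : Set ↑(sphere (0 : EuclideanSpace ℝ (Fin n)) 1)) :
    FsetA n T c A = bandA n 0 T c A := by
  ext x
  simp only [FsetA, Fset, lightCone, bandA, Set.mem_setOf_eq, Real.exp_zero]
  constructor
  · rintro ⟨⟨⟨hQ, _⟩, hd, hl, hu⟩, hh, hdir⟩
    exact ⟨hQ, hd, hl, hu, hh, hdir⟩
  · rintro ⟨hQ, hd, hl, hu, hh, hdir⟩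
    exact ⟨⟨⟨hQ, last_nonneg x hQ (by linarith)⟩, hd, hl, hu⟩, hh, hdir⟩

lemma measurableSet_bandA (a b c : ℝ) (A : Set ↑(sphere (0 : EuclideanSpace ℝ (Fin n)) 1))
    (hA : MeasurableSet A) : MeasurableSet (bandA n a b c A) := by
  have h1 : MeasurableSet {x : EuclideanSpace ℝ (Fin (n + 2)) | Qf n x = 0} :=
    continuous_Qf.measurable (measurableSet_singleton (0 : ℝ))
  have hms : Measurable fun x : EuclideanSpace ℝ (Fin (n + 2)) => x (sndC n) :=
    (EuclideanSpace.proj (sndC n)).continuous.measurable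
  have hml : Measurable fun x : EuclideanSpace ℝ (Fin (n + 2)) => x (lastC n) :=
    (EuclideanSpace.proj (lastC n)).continuous.measurable
  have h2 : MeasurableSet {x : EuclideanSpace ℝ (Fin (n + 2)) |
      x (lastC n) ^ 2 - x (sndC n) ^ 2 < c ^ 2} :=
    measurableSet_lt ((hml.pow_const 2).sub (hms.pow_const 2)) measurable_const
  have h3 : MeasurableSet {x : EuclideanSpace ℝ (Fin (n + 2)) |
      Real.exp a ≤ x (sndC n) + x (lastC n)} :=
    measurableSet_le measurable_const (hms.add hml)
  have h4 : MeasurableSet {x : EuclideanSpace ℝ (Fin (n + 2)) |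
      x (sndC n) + x (lastC n) < Real.exp b} :=
    measurableSet_lt (hms.add hml) measurable_const
  have h5 : MeasurableSet {x : EuclideanSpace ℝ (Fin (n + 2)) | headN n x ≠ 0} := by
    have : {x : EuclideanSpace ℝ (Fin (n + 2)) | headN n x ≠ 0}
        = (headN n ⁻¹' {0})ᶜ := by ext y; simp
    rw [this]
    exact (continuous_headN.measurable (measurableSet_singleton 0)).compl
  have h6 : MeasurableSet {x : EuclideanSpace ℝ (Fin (n + 2)) |
      dir n x ∈ Subtype.val '' A} :=
    measurable_dir (isClosed_sphere.measurableSet.subtype_image hA)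
  unfold bandA
  simp only [Set.setOf_and]
  exact h1.inter (h2.inter (h3.inter (h4.inter (h5.inter h6))))

lemma exp_le_aux (a t u : ℝ) : Real.exp a ≤ Real.exp (-t) * u ↔ Real.exp (a + t) ≤ u := by
  rw [Real.exp_add, Real.exp_neg, ← div_eq_inv_mul, le_div_iff₀ (Real.exp_pos t)]

lemma exp_lt_aux (b t u : ℝ) : Real.exp (-t) * u < Real.exp b ↔ u < Real.exp (b + t) := by
  rw [Real.exp_add, Real.exp_neg, ← div_eq_inv_mul, div_lt_iff₀ (Real.exp_pos t), mul_comm]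

lemma gmap_preimage_bandA (t a b c : ℝ)
    (A : Set ↑(sphere (0 : EuclideanSpace ℝ (Fin n)) 1)) :
    gmap n t ⁻¹' bandA n a b c A = bandA n (a + t) (b + t) c A := by
  ext x
  simp only [bandA, Set.mem_preimage, Set.mem_setOf_eq, Qf_gmap, gmap_diffsq, gmap_sum,
    headN_gmap, dir_gmap, exp_le_aux, exp_lt_aux]

lemma lam_bandA_shift (lam : Measure (EuclideanSpace ℝ (Fin (n + 2))))
    (hinv : ∀ t : ℝ, Measure.map (gmap n t) lam = lam)
    (c : ℝ) (A : Set ↑(sphere (0 : EuclideanSpace ℝ (Fin n)) 1)) (hA : MeasurableSet A)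
    (t a b : ℝ) :
    lam (bandA n (a + t) (b + t) c A) = lam (bandA n a b c A) := by
  rw [← gmap_preimage_bandA,
    ← Measure.map_apply (continuous_gmap t).measurable (measurableSet_bandA a b c A hA),
    hinv t]

lemma bandA_union (a b b' c : ℝ) (A : Set ↑(sphere (0 : EuclideanSpace ℝ (Fin n)) 1))
    (hab : a ≤ b) (hbb' : b ≤ b') :
    bandA n a b' c A = bandA n a b c A ∪ bandA n b b' c A := by
  have h1 : Real.exp a ≤ Real.exp b := Real.exp_le_exp.mpr hab
  have h2 : Real.exp b ≤ Real.exp b' := Real.exp_le_exp.mpr hbb'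
  ext x
  simp only [bandA, Set.mem_union, Set.mem_setOf_eq]
  constructor
  · rintro ⟨hq, hd, hl, hu, hh, hdir⟩
    by_cases hcase : x (sndC n) + x (lastC n) < Real.exp b
    · exact Or.inl ⟨hq, hd, hl, hcase, hh, hdir⟩
    · exact Or.inr ⟨hq, hd, le_of_not_gt hcase, hu, hh, hdir⟩
  · rintro (⟨hq, hd, hl, hu, hh, hdir⟩ | ⟨hq, hd, hl, hu, hh, hdir⟩)
    · exact ⟨hq, hd, hl, lt_of_lt_of_le hu h2, hh, hdir⟩
    · exact ⟨hq, hd, le_trans h1 hl, hu, hh, hdir⟩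

lemma bandA_disjoint (a b b' c : ℝ) (A : Set ↑(sphere (0 : EuclideanSpace ℝ (Fin n)) 1)) :
    Disjoint (bandA n a b c A) (bandA n b b' c A) := by
  rw [Set.disjoint_left]
  rintro x ⟨_, _, _, hu, _, _⟩ ⟨_, _, hl, _, _, _⟩
  exact absurd hu (not_lt.mpr hl)

lemma bandA_mono (a b b' c : ℝ) (A : Set ↑(sphere (0 : EuclideanSpace ℝ (Fin n)) 1))
    (h : b ≤ b') : bandA n a b c A ⊆ bandA n a b' c A := by
  rintro x ⟨hq, hd, hl, hu, hh, hdir⟩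
  exact ⟨hq, hd, hl, lt_of_lt_of_le hu (Real.exp_le_exp.mpr h), hh, hdir⟩

end FsetAux

open FsetAux in
/-- **Equation (3.2)**: for a `g_t`-invariant Borel measure `λ`,
`r·λ(F_{T,c,A}) = T·λ(F_{r,c,A})`. -/
theorem FsetA_measure_proportional (n : ℕ) (hn : 1 ≤ n)
    (lam : Measure (EuclideanSpace ℝ (Fin (n + 2))))
    (hinv : ∀ t : ℝ, Measure.map (gmap n t) lam = lam)
    (c : ℝ) (hc : 0 < c) (T r : ℝ) (hT : 0 < T) (hr : 0 < r)
    (A : Set ↑(sphere (0 : EuclideanSpace ℝ (Fin n)) 1)) (hA : MeasurableSet A) :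
    ENNReal.ofReal r * lam (FsetA n T c A) = ENNReal.ofReal T * lam (FsetA n r c A) := by
  clear hn
  set f : ℝ → ℝ≥0∞ := fun t => lam (bandA n 0 t c A) with hf
  -- monotonicity
  have hmono : ∀ s t : ℝ, s ≤ t → f s ≤ f t := fun s t hst =>
    measure_mono (bandA_mono 0 s t c A hst)
  -- additivity
  have hadd : ∀ s t : ℝ, 0 ≤ s → 0 ≤ t → f (s + t) = f s + f t := by
    intro s t hs ht
    have hu : bandA n 0 (s + t) c A = bandA n 0 s c A ∪ bandA n s (s + t) c A :=
      bandA_union 0 s (s + t) c A hs (by linarith)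
    have hshift : lam (bandA n s (s + t) c A) = lam (bandA n 0 t c A) := by
      have h := lam_bandA_shift lam hinv c A hA s 0 t
      rw [zero_add, add_comm t s] at h
      exact h
    rw [hf]
    simp only
    rw [hu, measure_union (bandA_disjoint 0 s (s + t) c A)
      (measurableSet_bandA s (s + t) c A hA), hshift]
  have hzero : f 0 = 0 := by
    have : bandA n 0 0 c A = ∅ := by
      ext x
      simp only [bandA, Set.mem_setOf_eq, Set.mem_empty_iff_false, iff_false, not_and]
      intro _ _ hl hu
      exact absurd hu (not_lt.mpr hl)
    simp [hf, this]
  -- natural-number scaling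
  have hnat : ∀ (k : ℕ) (t : ℝ), 0 ≤ t → f (k * t) = k * f t := by
    intro k
    induction k with
    | zero => intro t _; simp [hzero]
    | succ k ih =>
      intro t ht
      have : ((k : ℝ) + 1) * t = (k : ℝ) * t + t := by ring
      push_cast
      rw [this, hadd _ _ (by positivity) ht, ih t ht]
      ring
  have hgoalT : lam (FsetA n T c A) = f T := by rw [FsetA_eq_bandA]
  have hgoalr : lam (FsetA n r c A) = f r := by rw [FsetA_eq_bandA]
  rw [hgoalT, hgoalr]
  by_cases hfin1 : f 1 = ⊤
  · -- everything is infinite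
    have htop : ∀ t : ℝ, 0 < t → f t = ⊤ := by
      intro t ht
      by_contra hft
      obtain ⟨k, hk⟩ := exists_nat_ge (1 / t)
      have h1k : (1 : ℝ) ≤ k * t := by
        rw [div_le_iff₀ ht] at hk
        linarith
      have : f 1 ≤ (k : ℝ≥0∞) * f t := by
        rw [← hnat k t ht.le]
        exact hmono 1 _ h1k
      rw [hfin1] at this
      exact (ENNReal.mul_ne_top (ENNReal.natCast_ne_top k) hft) (top_le_iff.mp this)
    rw [htop T hT, htop r hr, ENNReal.mul_top (by simp [ENNReal.ofReal_eq_zero, not_le, hr]),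
      ENNReal.mul_top (by simp [ENNReal.ofReal_eq_zero, not_le, hT])]
  · -- everything is finite: reduce to real-valued function
    have hfin : ∀ t : ℝ, f t ≠ ⊤ := by
      intro t
      have h1 : f t ≤ f ((⌈t⌉₊ : ℝ) * 1) := by
        apply hmono
        rw [mul_one]
        exact le_trans (Nat.le_ceil t) le_rfl
      rw [hnat ⌈t⌉₊ 1 zero_le_one] at h1
      exact ne_top_of_le_ne_top (ENNReal.mul_ne_top (ENNReal.natCast_ne_top _) hfin1) h1
    set g : ℝ → ℝ := fun t => (f t).toReal with hg
    have hgnonneg : ∀ t, 0 ≤ g t := fun t => ENNReal.toReal_nonneg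
    have hgmono : ∀ s t : ℝ, s ≤ t → g s ≤ g t := fun s t hst =>
      (ENNReal.toReal_le_toReal (hfin s) (hfin t)).mpr (hmono s t hst)
    have hgnat : ∀ (k : ℕ) (t : ℝ), 0 ≤ t → g (k * t) = k * g t := by
      intro k t ht
      rw [hg]
      simp only
      rw [hnat k t ht, ENNReal.toReal_mul]
      norm_num
    have hgrat : ∀ q : ℚ, 0 < q → g q = q * g 1 := by
      intro q hq
      have hden : (0 : ℝ) < (q.den : ℝ) := by
        exact_mod_cast q.pos
      have hnum : ((q.num.toNat : ℝ)) = (q.num : ℝ) := by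
        exact_mod_cast Int.toNat_of_nonneg (le_of_lt (Rat.num_pos.mpr hq))
      have hqval : (q : ℝ) * q.den = q.num := by
        rw [Rat.cast_def]; field_simp
      have hqnn : (0 : ℝ) ≤ (q : ℝ) := by exact_mod_cast hq.le
      have key : (q.den : ℝ) * g q = (q.num.toNat : ℝ) * g 1 := by
        rw [← hgnat q.den q hqnn]
        have h1 : (q.den : ℝ) * q = (q.num.toNat : ℝ) := by
          rw [hnum, ← hqval]; ring
        rw [h1, ← hgnat q.num.toNat 1 zero_le_one, mul_one]
      have : g q = ((q.num : ℝ) / q.den) * g 1 := by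
        rw [← hnum]
        field_simp at key ⊢
        linarith [key]
      rw [this, Rat.cast_def]
    -- squeeze: g t = t * g 1 for t > 0
    have hlin : ∀ t : ℝ, 0 < t → g t = t * g 1 := by
      intro t ht
      have hg1 : 0 ≤ g 1 := hgnonneg 1
      have hupper : g t ≤ t * g 1 := by
        by_contra hcon
        push_neg at hcon
        rcases eq_or_lt_of_le hg1 with hg1z | hg1p
        · obtain ⟨q, hq⟩ := exists_rat_gt t
          have hle : g t ≤ g q := hgmono t q hq.le
          rw [hgrat q (by exact_mod_cast ht.trans hq), ← hg1z, mul_zero] at hle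
          rw [← hg1z, mul_zero] at hcon
          linarith
        · obtain ⟨q, hq1, hq2⟩ := exists_rat_btwn (show t < g t / g 1 by
            rw [lt_div_iff₀ hg1p]; linarith [hcon])
          have hqpos : (0 : ℚ) < q := by exact_mod_cast lt_trans ht hq1
          have h1 : g t ≤ g q := hgmono t q hq1.le
          rw [hgrat q hqpos] at h1
          rw [lt_div_iff₀ hg1p] at hq2
          linarith
      have hlower : t * g 1 ≤ g t := by
        by_contra hcon
        push_neg at hcon
        have hg1p : 0 < g 1 := by
          rcases eq_or_lt_of_le hg1 with hg1z | hg1p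
          · rw [← hg1z, mul_zero] at hcon
            exact absurd hcon (not_lt.mpr (hgnonneg t))
          · exact hg1p
        obtain ⟨q, hq1, hq2⟩ := exists_rat_btwn (show g t / g 1 < t by
          rw [div_lt_iff₀ hg1p]; linarith [hcon])
        have hqpos : (0 : ℚ) < q := by
          have : (0 : ℝ) ≤ g t / g 1 := div_nonneg (hgnonneg t) hg1p.le
          exact_mod_cast lt_of_le_of_lt this hq1
        have h1 : g q ≤ g t := hgmono q t hq2.le
        rw [hgrat q hqpos] at h1
        rw [div_lt_iff₀ hg1p] at hq1
        linarith
      linarith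
    have hfT : f T = ENNReal.ofReal (T * g 1) := by
      rw [← hlin T hT, hg]
      exact (ENNReal.ofReal_toReal (hfin T)).symm
    have hfr : f r = ENNReal.ofReal (r * g 1) := by
      rw [← hlin r hr, hg]
      exact (ENNReal.ofReal_toReal (hfin r)).symm
    rw [hfT, hfr, ← ENNReal.ofReal_mul hr.le, ← ENNReal.ofReal_mul hT.le]
    ring_nf
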